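/- arXiv:2007.12973 — 3 statements merged into one kernel-verified Lean document; each statement's English description precedes it below -/
import Mathlib

section
/- Under assumptions (A1)-(A6), the local average treatment effect E(Y_t^{A=1} − Y_t^{A=0} | A^{Z=1} > A^{Z=0}) equals the ratio {E[E(Y_t | X, Z=1)] − E[E(Y_t | X, Z=0)]} / {E[E(A | X, Z=1)] − E[E(A | X, Z=0)]}, provided the denominator is nonzero. -/
open Finset
open scoped Classical

noncomputable def Pr {Ω : Type*} [Fintype Ω] (p : Ω → ℝ) (A : Ω → Prop) : ℝ :=
  ∑ ω, if A ω then p ω else 0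

noncomputable def Ex {Ω : Type*} [Fintype Ω] (p : Ω → ℝ) (f : Ω → ℝ) : ℝ :=
  ∑ ω, p ω * f ω

noncomputable def cexp {Ω : Type*} [Fintype Ω] (p : Ω → ℝ) (f : Ω → ℝ) (A : Ω → Prop) : ℝ :=
  (∑ ω, if A ω then p ω * f ω else 0) / Pr p A

noncomputable def Exc {Ω : Type*} [Fintype Ω] (p : Ω → ℝ) (f : Ω → ℝ) (A : Ω → Prop) : ℝ :=
  ∑ ω, if A ω then p ω * f ω else 0

lemma cexp_eq {Ω : Type*} [Fintype Ω] (p : Ω → ℝ) (f : Ω → ℝ) (A : Ω → Prop) :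
    cexp p f A = Exc p f A / Pr p A := rfl

lemma Pr_congr {Ω : Type*} [Fintype Ω] (p : Ω → ℝ) {A B : Ω → Prop} (h : ∀ ω, A ω ↔ B ω) :
    Pr p A = Pr p B := by
  unfold Pr; exact Finset.sum_congr rfl fun ω _ => by simp [h ω]

lemma Pr_nonneg {Ω : Type*} [Fintype Ω] (p : Ω → ℝ) (hp0 : ∀ ω, 0 ≤ p ω) (A : Ω → Prop) :
    0 ≤ Pr p A :=
  Finset.sum_nonneg fun ω _ => by by_cases h : A ω <;> simp [h, hp0 ω]

lemma pt_zero {Ω : Type*} [Fintype Ω] (p : Ω → ℝ) (hp0 : ∀ ω, 0 ≤ p ω) {A : Ω → Prop}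
    (h : Pr p A = 0) : ∀ ω, A ω → p ω = 0 := by
  intro ω hω
  have := (Finset.sum_eq_zero_iff_of_nonneg (fun i _ => by split_ifs <;> simp [hp0 i])).mp h ω (Finset.mem_univ ω)
  simpa [hω] using this

lemma Pr_compl {Ω : Type*} [Fintype Ω] (p : Ω → ℝ) (A : Ω → Prop) :
    Pr p A + Pr p (fun ω => ¬ A ω) = ∑ ω, p ω := by
  unfold Pr
  rw [← Finset.sum_add_distrib]
  exact Finset.sum_congr rfl fun ω _ => by split_ifs <;> simp_all

lemma Exc_congr {Ω : Type*} [Fintype Ω] (p : Ω → ℝ) {f g : Ω → ℝ} {A B : Ω → Prop}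
    (hAB : ∀ ω, A ω ↔ B ω) (hfg : ∀ ω, B ω → f ω = g ω) : Exc p f A = Exc p g B := by
  unfold Exc
  refine Finset.sum_congr rfl fun ω _ => ?_
  by_cases h : B ω
  · rw [if_pos ((hAB ω).mpr h), if_pos h, hfg ω h]
  · rw [if_neg (fun he => h ((hAB ω).mp he)), if_neg h]

lemma Exc_sub {Ω : Type*} [Fintype Ω] (p : Ω → ℝ) (f g : Ω → ℝ) (A : Ω → Prop) :
    Exc p f A - Exc p g A = Exc p (fun ω => f ω - g ω) A := by
  unfold Exc
  rw [← Finset.sum_sub_distrib]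
  exact Finset.sum_congr rfl fun ω _ => by split_ifs <;> ring

lemma Exc_one {Ω : Type*} [Fintype Ω] (p : Ω → ℝ) (A : Ω → Prop) :
    Exc p (fun _ => (1:ℝ)) A = Pr p A := by
  unfold Exc Pr
  exact Finset.sum_congr rfl fun ω _ => by split_ifs <;> simp

lemma Exc_sum_fiber {Ω 𝕏 : Type*} [Fintype Ω] [Fintype 𝕏] (p f : Ω → ℝ) (C : Ω → Prop)
    (X : Ω → 𝕏) : ∑ x : 𝕏, Exc p f (fun ω => C ω ∧ X ω = x) = Exc p f C := by
  unfold Exc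
  rw [Finset.sum_comm]
  refine Finset.sum_congr rfl fun ω _ => ?_
  by_cases hC : C ω <;> simp [hC]

lemma decomp {Ω : Type*} [Fintype Ω] (w : Ω → ℝ) (A0 A1 Y0 Y1 : Ω → ℝ)
    (hA0bin : ∀ ω, A0 ω = 0 ∨ A0 ω = 1) (hA1bin : ∀ ω, A1 ω = 0 ∨ A1 ω = 1)
    (hY0bin : ∀ ω, Y0 ω = 0 ∨ Y0 ω = 1) (hY1bin : ∀ ω, Y1 ω = 0 ∨ Y1 ω = 1)
    (G : ℝ → ℝ → ℝ → ℝ → ℝ) :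
    (∑ ω, w ω * G (A0 ω) (A1 ω) (Y0 ω) (Y1 ω))
      = ∑ t ∈ (({0,1} : Finset ℝ) ×ˢ ({0,1} : Finset ℝ) ×ˢ ({0,1} : Finset ℝ) ×ˢ ({0,1} : Finset ℝ)),
          G t.1 t.2.1 t.2.2.1 t.2.2.2 *
            (∑ ω, if A0 ω = t.1 ∧ A1 ω = t.2.1 ∧ Y0 ω = t.2.2.1 ∧ Y1 ω = t.2.2.2 then w ω else 0) := by
  have key : ∀ ω : Ω, w ω * G (A0 ω) (A1 ω) (Y0 ω) (Y1 ω)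
      = ∑ t ∈ (({0,1} : Finset ℝ) ×ˢ ({0,1} : Finset ℝ) ×ˢ ({0,1} : Finset ℝ) ×ˢ ({0,1} : Finset ℝ)),
          (if A0 ω = t.1 ∧ A1 ω = t.2.1 ∧ Y0 ω = t.2.2.1 ∧ Y1 ω = t.2.2.2
            then w ω * G t.1 t.2.1 t.2.2.1 t.2.2.2 else 0) := by
    intro ω
    have hiff : ∀ t : ℝ × ℝ × ℝ × ℝ,
        (A0 ω = t.1 ∧ A1 ω = t.2.1 ∧ Y0 ω = t.2.2.1 ∧ Y1 ω = t.2.2.2)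
          ↔ ((A0 ω, A1 ω, Y0 ω, Y1 ω) = t) := fun t => by
      simp [Prod.ext_iff]
    simp only [hiff]
    rw [Finset.sum_ite_eq]
    have hmem : (A0 ω, A1 ω, Y0 ω, Y1 ω) ∈
        (({0,1} : Finset ℝ) ×ˢ ({0,1} : Finset ℝ) ×ˢ ({0,1} : Finset ℝ) ×ˢ ({0,1} : Finset ℝ)) := by
      simp [Finset.mem_product, hA0bin ω, hA1bin ω, hY0bin ω, hY1bin ω]
    simp [hmem]
  calc (∑ ω, w ω * G (A0 ω) (A1 ω) (Y0 ω) (Y1 ω))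
      = ∑ ω, ∑ t ∈ (({0,1} : Finset ℝ) ×ˢ ({0,1} : Finset ℝ) ×ˢ ({0,1} : Finset ℝ) ×ˢ ({0,1} : Finset ℝ)),
          (if A0 ω = t.1 ∧ A1 ω = t.2.1 ∧ Y0 ω = t.2.2.1 ∧ Y1 ω = t.2.2.2
            then w ω * G t.1 t.2.1 t.2.2.1 t.2.2.2 else 0) := Finset.sum_congr rfl fun ω _ => key ω
    _ = ∑ t ∈ (({0,1} : Finset ℝ) ×ˢ ({0,1} : Finset ℝ) ×ˢ ({0,1} : Finset ℝ) ×ˢ ({0,1} : Finset ℝ)),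
          ∑ ω, (if A0 ω = t.1 ∧ A1 ω = t.2.1 ∧ Y0 ω = t.2.2.1 ∧ Y1 ω = t.2.2.2
            then w ω * G t.1 t.2.1 t.2.2.1 t.2.2.2 else 0) := Finset.sum_comm
    _ = _ := by
        refine Finset.sum_congr rfl fun t _ => ?_
        rw [Finset.mul_sum]
        refine Finset.sum_congr rfl fun ω _ => ?_
        split_ifs <;> ring

lemma transferE {Ω 𝕏 : Type*} [Fintype Ω] (p : Ω → ℝ) (X : Ω → 𝕏) (Z A0 A1 Y0 Y1 : Ω → ℝ)
    (hA0bin : ∀ ω, A0 ω = 0 ∨ A0 ω = 1) (hA1bin : ∀ ω, A1 ω = 0 ∨ A1 ω = 1)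
    (hY0bin : ∀ ω, Y0 ω = 0 ∨ Y0 ω = 1) (hY1bin : ∀ ω, Y1 ω = 0 ∨ Y1 ω = 1)
    (hign : ∀ (x : 𝕏) (z a0 a1 y0 y1 : ℝ),
      Pr p (fun ω => Z ω = z ∧ A0 ω = a0 ∧ A1 ω = a1 ∧ Y0 ω = y0 ∧ Y1 ω = y1 ∧ X ω = x) *
          Pr p (fun ω => X ω = x)
        = Pr p (fun ω => Z ω = z ∧ X ω = x) *
            Pr p (fun ω => A0 ω = a0 ∧ A1 ω = a1 ∧ Y0 ω = y0 ∧ Y1 ω = y1 ∧ X ω = x))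
    (G : ℝ → ℝ → ℝ → ℝ → ℝ) (x : 𝕏) (z : ℝ) :
    Pr p (fun ω => Z ω = z ∧ X ω = x) *
        Exc p (fun ω => G (A0 ω) (A1 ω) (Y0 ω) (Y1 ω)) (fun ω => X ω = x)
      = Pr p (fun ω => X ω = x) *
        Exc p (fun ω => G (A0 ω) (A1 ω) (Y0 ω) (Y1 ω)) (fun ω => Z ω = z ∧ X ω = x) := by
  unfold Exc
  have d1 := decomp (fun ω => if X ω = x then p ω else 0) A0 A1 Y0 Y1
    hA0bin hA1bin hY0bin hY1bin G
  have d2 := decomp (fun ω => if Z ω = z ∧ X ω = x then p ω else 0) A0 A1 Y0 Y1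
    hA0bin hA1bin hY0bin hY1bin G
  have e1 : ∀ t : ℝ × ℝ × ℝ × ℝ,
      (∑ ω, if A0 ω = t.1 ∧ A1 ω = t.2.1 ∧ Y0 ω = t.2.2.1 ∧ Y1 ω = t.2.2.2
        then (if X ω = x then p ω else 0) else 0)
      = Pr p (fun ω => A0 ω = t.1 ∧ A1 ω = t.2.1 ∧ Y0 ω = t.2.2.1 ∧ Y1 ω = t.2.2.2 ∧ X ω = x) := by
    intro t
    unfold Pr
    refine Finset.sum_congr rfl fun ω _ => ?_
    split_ifs <;> first | rfl | (exfalso; tauto)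
  have e2 : ∀ t : ℝ × ℝ × ℝ × ℝ,
      (∑ ω, if A0 ω = t.1 ∧ A1 ω = t.2.1 ∧ Y0 ω = t.2.2.1 ∧ Y1 ω = t.2.2.2
        then (if Z ω = z ∧ X ω = x then p ω else 0) else 0)
      = Pr p (fun ω => Z ω = z ∧ A0 ω = t.1 ∧ A1 ω = t.2.1 ∧ Y0 ω = t.2.2.1 ∧ Y1 ω = t.2.2.2 ∧ X ω = x) := by
    intro t
    unfold Pr
    refine Finset.sum_congr rfl fun ω _ => ?_
    split_ifs <;> first | rfl | (exfalso; tauto)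
  trans (Pr p (fun ω => Z ω = z ∧ X ω = x) *
      ∑ ω, (if X ω = x then p ω else 0) * G (A0 ω) (A1 ω) (Y0 ω) (Y1 ω))
  · congr 1
    refine Finset.sum_congr rfl fun ω _ => ?_
    by_cases h : X ω = x <;> simp [h]
  trans (Pr p (fun ω => X ω = x) *
      ∑ ω, (if Z ω = z ∧ X ω = x then p ω else 0) * G (A0 ω) (A1 ω) (Y0 ω) (Y1 ω))
  swap
  · congr 1
    refine Finset.sum_congr rfl fun ω _ => ?_
    by_cases h : Z ω = z ∧ X ω = x <;> simp [h]
  rw [d1, d2, Finset.mul_sum, Finset.mul_sum]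
  refine Finset.sum_congr rfl fun t _ => ?_
  rw [e1 t, e2 t]
  have h2 := hign x z t.1 t.2.1 t.2.2.1 t.2.2.2
  linear_combination (-G t.1 t.2.1 t.2.2.1 t.2.2.2) * h2


/-- identification of the local average treatment effect (Lemma 1). -/
theorem late_identification {Ω 𝕏 : Type*} [Fintype Ω] [Fintype 𝕏]
    (p : Ω → ℝ) (hp0 : ∀ ω, 0 ≤ p ω) (hp1 : ∑ ω, p ω = 1)
    (X : Ω → 𝕏) (Z A Y A0 A1 Y0 Y1 : Ω → ℝ)
    (hZbin : ∀ ω, Z ω = 0 ∨ Z ω = 1)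
    (hA0bin : ∀ ω, A0 ω = 0 ∨ A0 ω = 1) (hA1bin : ∀ ω, A1 ω = 0 ∨ A1 ω = 1)
    (hY0bin : ∀ ω, Y0 ω = 0 ∨ Y0 ω = 1) (hY1bin : ∀ ω, Y1 ω = 0 ∨ Y1 ω = 1)
    -- (A1) consistency: A = A^Z and Y = Y^A (with (A3) exclusion restriction built in:
    -- the potential outcomes Y^a depend on the instrument only through the treatment)
    (hconsA : ∀ ω, A ω = if Z ω = 1 then A1 ω else A0 ω)
    (hconsY : ∀ ω, Y ω = if A ω = 1 then Y1 ω else Y0 ω)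
    -- (A2) ignorability: Z ⟂ (Y^0, Y^1, A^0, A^1) | X
    (hign : ∀ (x : 𝕏) (z a0 a1 y0 y1 : ℝ),
      Pr p (fun ω => Z ω = z ∧ A0 ω = a0 ∧ A1 ω = a1 ∧ Y0 ω = y0 ∧ Y1 ω = y1 ∧ X ω = x) *
          Pr p (fun ω => X ω = x)
        = Pr p (fun ω => Z ω = z ∧ X ω = x) *
            Pr p (fun ω => A0 ω = a0 ∧ A1 ω = a1 ∧ Y0 ω = y0 ∧ Y1 ω = y1 ∧ X ω = x))
    -- (A5) positivity
    (hpos : ∀ (x : 𝕏) (z : ℝ), (z = 0 ∨ z = 1) → Pr p (fun ω => X ω = x) > 0 →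
      Pr p (fun ω => Z ω = z ∧ X ω = x) > 0)
    -- (A6) monotonicity
    (hmono : Pr p (fun ω => A0 ω ≤ A1 ω) = 1)
    -- existence of compliers
    (hcompl : Pr p (fun ω => A0 ω < A1 ω) > 0)
    -- the denominator is nonzero
    (hden : (∑ x : 𝕏, Pr p (fun ω => X ω = x) *
        (cexp p A (fun ω => X ω = x ∧ Z ω = 1) - cexp p A (fun ω => X ω = x ∧ Z ω = 0))) ≠ 0) :
    cexp p (fun ω => Y1 ω - Y0 ω) (fun ω => A0 ω < A1 ω)
      = (∑ x : 𝕏, Pr p (fun ω => X ω = x) *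
            (cexp p Y (fun ω => X ω = x ∧ Z ω = 1) - cexp p Y (fun ω => X ω = x ∧ Z ω = 0)))
        / (∑ x : 𝕏, Pr p (fun ω => X ω = x) *
            (cexp p A (fun ω => X ω = x ∧ Z ω = 1) - cexp p A (fun ω => X ω = x ∧ Z ω = 0))) := by
  have hmono0 : Pr p (fun ω => ¬ A0 ω ≤ A1 ω) = 0 := by
    have h := Pr_compl p (fun ω => A0 ω ≤ A1 ω)
    rw [hmono, hp1] at h; linarith
  have hmono' : ∀ ω, ¬ A0 ω ≤ A1 ω → p ω = 0 := pt_zero p hp0 hmono0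
  -- generic per-x identification step
  have main : ∀ (W : Ω → ℝ) (G1 G0 : ℝ → ℝ → ℝ → ℝ → ℝ),
      (∀ ω, Z ω = 1 → W ω = G1 (A0 ω) (A1 ω) (Y0 ω) (Y1 ω)) →
      (∀ ω, Z ω = 0 → W ω = G0 (A0 ω) (A1 ω) (Y0 ω) (Y1 ω)) →
      ∀ x : 𝕏, Pr p (fun ω => X ω = x) *
          (cexp p W (fun ω => X ω = x ∧ Z ω = 1) - cexp p W (fun ω => X ω = x ∧ Z ω = 0))
        = Exc p (fun ω => G1 (A0 ω) (A1 ω) (Y0 ω) (Y1 ω) - G0 (A0 ω) (A1 ω) (Y0 ω) (Y1 ω))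
            (fun ω => X ω = x) := by
    intro W G1 G0 hW1 hW0 x
    rcases eq_or_lt_of_le (Pr_nonneg p hp0 (fun ω => X ω = x)) with h0 | hx
    · rw [← h0, zero_mul]
      symm
      unfold Exc
      refine Finset.sum_eq_zero fun ω _ => ?_
      by_cases h : X ω = x
      · rw [if_pos h, pt_zero p hp0 h0.symm ω h, zero_mul]
      · rw [if_neg h]
    · have hz1 := hpos x 1 (Or.inr rfl) hx
      have hz0 := hpos x 0 (Or.inl rfl) hx
      have step : ∀ (z : ℝ) (G : ℝ → ℝ → ℝ → ℝ → ℝ),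
          0 < Pr p (fun ω => Z ω = z ∧ X ω = x) →
          (∀ ω, Z ω = z → W ω = G (A0 ω) (A1 ω) (Y0 ω) (Y1 ω)) →
          Pr p (fun ω => X ω = x) * cexp p W (fun ω => X ω = x ∧ Z ω = z)
            = Exc p (fun ω => G (A0 ω) (A1 ω) (Y0 ω) (Y1 ω)) (fun ω => X ω = x) := by
        intro z G hz hW
        rw [cexp_eq]
        have hE : Exc p W (fun ω => X ω = x ∧ Z ω = z)
            = Exc p (fun ω => G (A0 ω) (A1 ω) (Y0 ω) (Y1 ω)) (fun ω => Z ω = z ∧ X ω = x) :=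
          Exc_congr p (fun ω => and_comm) (fun ω h => hW ω h.1)
        have hP : Pr p (fun ω => X ω = x ∧ Z ω = z) = Pr p (fun ω => Z ω = z ∧ X ω = x) :=
          Pr_congr p fun ω => and_comm
        rw [hE, hP]
        have htr := transferE p X Z A0 A1 Y0 Y1 hA0bin hA1bin hY0bin hY1bin hign G x z
        rw [mul_comm, div_mul_eq_mul_div, div_eq_iff hz.ne']
        linear_combination -htr
      rw [mul_sub, step 1 G1 hz1 hW1, step 0 G0 hz0 hW0, Exc_sub]
  have mainY := main Y (fun a0 a1 y0 y1 => if a1 = 1 then y1 else y0)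
      (fun a0 a1 y0 y1 => if a0 = 1 then y1 else y0)
      (fun ω hz => by rw [hconsY ω, hconsA ω, if_pos hz])
      (fun ω hz => by
        show Y ω = if A0 ω = 1 then Y1 ω else Y0 ω
        rw [hconsY ω, show A ω = A0 ω from by
          rw [hconsA ω, if_neg (show ¬ Z ω = 1 by rw [hz]; norm_num)]])
  have mainA := main A (fun a0 a1 y0 y1 => a1) (fun a0 a1 y0 y1 => a0)
      (fun ω hz => by show A ω = A1 ω; rw [hconsA ω, if_pos hz])
      (fun ω hz => by show A ω = A0 ω; rw [hconsA ω, if_neg (show ¬ Z ω = 1 by rw [hz]; norm_num)])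
  have ptY : ∀ x : 𝕏,
      Exc p (fun ω => (if A1 ω = 1 then Y1 ω else Y0 ω) - (if A0 ω = 1 then Y1 ω else Y0 ω))
          (fun ω => X ω = x)
        = Exc p (fun ω => Y1 ω - Y0 ω) (fun ω => A0 ω < A1 ω ∧ X ω = x) := by
    intro x
    unfold Exc
    refine Finset.sum_congr rfl fun ω _ => ?_
    by_cases hx' : X ω = x
    · by_cases hle : A0 ω ≤ A1 ω
      · rcases hA0bin ω with h0 | h0 <;> rcases hA1bin ω with h1 | h1
        · norm_num [hx', h0, h1]
        · norm_num [hx', h0, h1]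
        · exfalso; rw [h0, h1] at hle; norm_num at hle
        · norm_num [hx', h0, h1]
      · simp [hmono' ω hle]
    · simp [hx']
  have ptA : ∀ x : 𝕏,
      Exc p (fun ω => A1 ω - A0 ω) (fun ω => X ω = x)
        = Exc p (fun _ => (1:ℝ)) (fun ω => A0 ω < A1 ω ∧ X ω = x) := by
    intro x
    unfold Exc
    refine Finset.sum_congr rfl fun ω _ => ?_
    by_cases hx' : X ω = x
    · by_cases hle : A0 ω ≤ A1 ω
      · rcases hA0bin ω with h0 | h0 <;> rcases hA1bin ω with h1 | h1
        · norm_num [hx', h0, h1]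
        · norm_num [hx', h0, h1]
        · exfalso; rw [h0, h1] at hle; norm_num at hle
        · norm_num [hx', h0, h1]
      · simp [hmono' ω hle]
    · simp [hx']
  have hNum : (∑ x : 𝕏, Pr p (fun ω => X ω = x) *
        (cexp p Y (fun ω => X ω = x ∧ Z ω = 1) - cexp p Y (fun ω => X ω = x ∧ Z ω = 0)))
      = Exc p (fun ω => Y1 ω - Y0 ω) (fun ω => A0 ω < A1 ω) := by
    rw [← Exc_sum_fiber p (fun ω => Y1 ω - Y0 ω) (fun ω => A0 ω < A1 ω) X]
    exact Finset.sum_congr rfl fun x _ => (mainY x).trans (ptY x)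
  have hDen : (∑ x : 𝕏, Pr p (fun ω => X ω = x) *
        (cexp p A (fun ω => X ω = x ∧ Z ω = 1) - cexp p A (fun ω => X ω = x ∧ Z ω = 0)))
      = Pr p (fun ω => A0 ω < A1 ω) := by
    rw [← Exc_one p (fun ω => A0 ω < A1 ω),
      ← Exc_sum_fiber p (fun _ => (1:ℝ)) (fun ω => A0 ω < A1 ω) X]
    exact Finset.sum_congr rfl fun x _ => (mainA x).trans (ptA x)
  rw [hNum, hDen, cexp_eq]
end

section
/- Let μ̂, π̂, ω̂, δ̂ be arbitrary measurable functions of X with δ̂, ω̂ bounded away from 0. Then the bias of the one-step corrected functional satisfies E[ μ̂π̂ + (1(R=1,Z=1,A=1)/(ω̂δ̂))(Y_t − μ̂) + (1(Z=1)/δ̂)·μ̂·(A − π̂) ] − E[μ π] = E[ ((ωδ − ω̂δ̂)/(ω̂δ̂))·π·(μ − μ̂) ] + E[ ((δ − δ̂)/δ̂)·μ̂·(π − π̂) ], where μ = μ_{t,1,1}, π = π_1, ω = ω_{1,1}, δ = δ_1 are the true nuisance functions. -/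
open Finset
open scoped Classical

/-- Fiberwise decomposition of a sum. -/
lemma fiber_sum {Ω 𝕏 : Type*} [Fintype Ω] [Fintype 𝕏] (X : Ω → 𝕏) (g : Ω → ℝ) :
    ∑ ω, g ω = ∑ x, ∑ ω, if X ω = x then g ω else 0 := by
  rw [Finset.sum_comm]
  refine Finset.sum_congr rfl fun ω _ => ?_
  simp

/-- doubly robust bias decomposition of the one-step corrected functional. -/
theorem doubly_robust_bias_decomposition {Ω 𝕏 : Type*} [Fintype Ω] [Fintype 𝕏]
    (p : Ω → ℝ) (hp0 : ∀ ω, 0 ≤ p ω) (hp1 : ∑ ω, p ω = 1)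
    (X : Ω → 𝕏) (Z A R Y : Ω → ℝ)
    (hZbin : ∀ ω, Z ω = 0 ∨ Z ω = 1) (hAbin : ∀ ω, A ω = 0 ∨ A ω = 1)
    (hRbin : ∀ ω, R ω = 0 ∨ R ω = 1) (hYbin : ∀ ω, Y ω = 0 ∨ Y ω = 1)
    -- estimated nuisance functions, with δ̂, ω̂ bounded away from 0
    (μh πh ωh δh : 𝕏 → ℝ) (hδh : ∀ x, 0 < δh x) (hωh : ∀ x, 0 < ωh x)
    -- R ⟂ Y_t | (X, Z, A)
    (hCI : ∀ x : 𝕏,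
      Pr p (fun ω => R ω = 1 ∧ Y ω = 1 ∧ X ω = x ∧ Z ω = 1 ∧ A ω = 1) *
          Pr p (fun ω => X ω = x ∧ Z ω = 1 ∧ A ω = 1)
        = Pr p (fun ω => R ω = 1 ∧ X ω = x ∧ Z ω = 1 ∧ A ω = 1) *
            Pr p (fun ω => Y ω = 1 ∧ X ω = x ∧ Z ω = 1 ∧ A ω = 1))
    -- positivity of the true nuisances where required
    (hpos : ∀ x : 𝕏, Pr p (fun ω => X ω = x) > 0 →
      Pr p (fun ω => Z ω = 1 ∧ X ω = x) > 0 ∧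
      Pr p (fun ω => X ω = x ∧ Z ω = 1 ∧ A ω = 1) > 0 ∧
      Pr p (fun ω => X ω = x ∧ Z ω = 1 ∧ A ω = 1 ∧ R ω = 1) > 0) :
    -- true nuisance functions μ = μ_{t,1,1}, π = π_1, ω = ω_{1,1}, δ = δ_1
    let δ : 𝕏 → ℝ := fun x =>
      Pr p (fun ω => Z ω = 1 ∧ X ω = x) / Pr p (fun ω => X ω = x)
    let π : 𝕏 → ℝ := fun x => cexp p A (fun ω => X ω = x ∧ Z ω = 1)
    let ωc : 𝕏 → ℝ := fun x => cexp p R (fun ω => X ω = x ∧ Z ω = 1 ∧ A ω = 1)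
    let μ : 𝕏 → ℝ := fun x => cexp p Y (fun ω => X ω = x ∧ R ω = 1 ∧ Z ω = 1 ∧ A ω = 1)
    Ex p (fun ω =>
        μh (X ω) * πh (X ω)
        + (if R ω = 1 ∧ Z ω = 1 ∧ A ω = 1 then 1 else 0) / (ωh (X ω) * δh (X ω)) *
            (Y ω - μh (X ω))
        + (if Z ω = 1 then 1 else 0) / δh (X ω) * μh (X ω) * (A ω - πh (X ω)))
      - Ex p (fun ω => μ (X ω) * π (X ω))
    = Ex p (fun ω =>
        (ωc (X ω) * δ (X ω) - ωh (X ω) * δh (X ω)) / (ωh (X ω) * δh (X ω)) *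
          π (X ω) * (μ (X ω) - μh (X ω)))
      + Ex p (fun ω =>
          (δ (X ω) - δh (X ω)) / δh (X ω) * μh (X ω) * (π (X ω) - πh (X ω))) := by
  intro δ π ωc μ
  simp only [Ex]
  rw [fiber_sum X, fiber_sum X (fun ω => p ω * (μ (X ω) * π (X ω))),
    fiber_sum X (fun ω => p ω *
      ((ωc (X ω) * δ (X ω) - ωh (X ω) * δh (X ω)) / (ωh (X ω) * δh (X ω)) *
        π (X ω) * (μ (X ω) - μh (X ω)))),
    fiber_sum X (fun ω => p ω *
      ((δ (X ω) - δh (X ω)) / δh (X ω) * μh (X ω) * (π (X ω) - πh (X ω))))]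
  rw [← Finset.sum_sub_distrib, ← Finset.sum_add_distrib]
  refine Finset.sum_congr rfl fun x _ => ?_
  -- helper : constant fiber sums
  have hconst : ∀ c : ℝ, (∑ ω, if X ω = x then p ω * c else 0)
      = c * Pr p (fun ω => X ω = x) := by
    intro c
    simp only [Pr, Finset.mul_sum]
    refine Finset.sum_congr rfl fun ω _ => ?_
    split_ifs <;> ring
  have hrepl : ∀ g : Ω → 𝕏 → ℝ, (∑ ω, if X ω = x then g ω (X ω) else 0)
      = ∑ ω, if X ω = x then g ω x else 0 := by
    intro g
    refine Finset.sum_congr rfl fun ω _ => ?_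
    split_ifs with h
    · rw [h]
    · rfl
  by_cases hN0 : Pr p (fun ω => X ω = x) > 0
  · -- positive fiber case
    obtain ⟨h1, h2, h3⟩ := hpos x hN0
    have hω0 : ωh x ≠ 0 := ne_of_gt (hωh x)
    have hδ0 : δh x ≠ 0 := ne_of_gt (hδh x)
    -- reorder / rewrite Pr's
    have e2 : Pr p (fun ω => X ω = x ∧ Z ω = 1) = Pr p (fun ω => Z ω = 1 ∧ X ω = x) := by
      unfold Pr
      exact Finset.sum_congr rfl fun ω _ => by
        by_cases hX : X ω = x <;> by_cases hZ : Z ω = 1 <;> simp [hX, hZ]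
    have eSA : Pr p (fun ω => X ω = x ∧ Z ω = 1 ∧ A ω = 1)
        = ∑ ω, if X ω = x ∧ Z ω = 1 then p ω * A ω else 0 := by
      unfold Pr
      exact Finset.sum_congr rfl fun ω _ => by
        rcases hAbin ω with hA | hA <;> simp [hA]
    have eSR : Pr p (fun ω => X ω = x ∧ R ω = 1 ∧ Z ω = 1 ∧ A ω = 1)
        = ∑ ω, if X ω = x ∧ Z ω = 1 ∧ A ω = 1 then p ω * R ω else 0 := by
      unfold Pr
      exact Finset.sum_congr rfl fun ω _ => by
        rcases hRbin ω with hR | hR <;> by_cases hX : X ω = x <;>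
          by_cases hZ : Z ω = 1 <;> by_cases hA : A ω = 1 <;> simp [hR, hX, hZ, hA]
    have eP4 : Pr p (fun ω => X ω = x ∧ R ω = 1 ∧ Z ω = 1 ∧ A ω = 1)
        = Pr p (fun ω => X ω = x ∧ Z ω = 1 ∧ A ω = 1 ∧ R ω = 1) := by
      unfold Pr
      exact Finset.sum_congr rfl fun ω _ => by
        by_cases hX : X ω = x <;> by_cases hZ : Z ω = 1 <;>
          by_cases hA : A ω = 1 <;> by_cases hR : R ω = 1 <;> simp [hX, hZ, hA, hR]
    -- nonvanishing denominators
    have hP1 : Pr p (fun ω => X ω = x) ≠ 0 := ne_of_gt hN0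
    have hP2 : Pr p (fun ω => X ω = x ∧ Z ω = 1) ≠ 0 := by rw [e2]; exact ne_of_gt h1
    have hSA : (∑ ω, if X ω = x ∧ Z ω = 1 then p ω * A ω else 0) ≠ 0 := by
      rw [← eSA]; exact ne_of_gt h2
    have hSR : (∑ ω, if X ω = x ∧ Z ω = 1 ∧ A ω = 1 then p ω * R ω else 0) ≠ 0 := by
      rw [← eSR, eP4]; exact ne_of_gt h3
    -- values of the true nuisances at x
    have hδx : δ x = Pr p (fun ω => Z ω = 1 ∧ X ω = x) / Pr p (fun ω => X ω = x) := rfl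
    have hπx : π x = (∑ ω, if X ω = x ∧ Z ω = 1 then p ω * A ω else 0) /
        Pr p (fun ω => X ω = x ∧ Z ω = 1) := by
      simp only [π, cexp]; congr; funext ω; congr
    have hωx : ωc x = (∑ ω, if X ω = x ∧ Z ω = 1 ∧ A ω = 1 then p ω * R ω else 0) /
        Pr p (fun ω => X ω = x ∧ Z ω = 1 ∧ A ω = 1) := by
      simp only [ωc, cexp]; congr; funext ω; congr
    have hμx : μ x = (∑ ω, if X ω = x ∧ R ω = 1 ∧ Z ω = 1 ∧ A ω = 1 then p ω * Y ω else 0) /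
        Pr p (fun ω => X ω = x ∧ R ω = 1 ∧ Z ω = 1 ∧ A ω = 1) := by
      simp only [μ, cexp]; congr; funext ω; congr
    -- decompose the one-step fiber sum
    have G1 : (∑ ω, if X ω = x then p ω *
          (μh (X ω) * πh (X ω)
            + (if R ω = 1 ∧ Z ω = 1 ∧ A ω = 1 then 1 else 0) / (ωh (X ω) * δh (X ω)) *
                (Y ω - μh (X ω))
            + (if Z ω = 1 then 1 else 0) / δh (X ω) * μh (X ω) * (A ω - πh (X ω))) else 0)
        = μh x * πh x * Pr p (fun ω => X ω = x)
          + ((∑ ω, if X ω = x ∧ R ω = 1 ∧ Z ω = 1 ∧ A ω = 1 then p ω * Y ω else 0)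
              - μh x * Pr p (fun ω => X ω = x ∧ R ω = 1 ∧ Z ω = 1 ∧ A ω = 1)) / (ωh x * δh x)
          + μh x * ((∑ ω, if X ω = x ∧ Z ω = 1 then p ω * A ω else 0)
              - πh x * Pr p (fun ω => X ω = x ∧ Z ω = 1)) / δh x := by
      simp only [Pr, Finset.mul_sum, Finset.sum_div, ← Finset.sum_sub_distrib,
        ← Finset.sum_add_distrib]
      refine Finset.sum_congr rfl fun ω _ => ?_
      rcases hZbin ω with hZ | hZ <;> rcases hAbin ω with hA | hA <;>
        rcases hRbin ω with hR | hR <;> by_cases hX : X ω = x <;>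
        simp only [hX, hZ, hA, hR] <;>
        · try simp
          try field_simp
          try ring
    have G2 : (∑ ω, if X ω = x then p ω * (μ (X ω) * π (X ω)) else 0)
        = μ x * π x * Pr p (fun ω => X ω = x) := by
      rw [hrepl (fun ω y => p ω * (μ y * π y)), hconst]
    have G3 : (∑ ω, if X ω = x then p ω *
          ((ωc (X ω) * δ (X ω) - ωh (X ω) * δh (X ω)) / (ωh (X ω) * δh (X ω)) *
            π (X ω) * (μ (X ω) - μh (X ω))) else 0)
        = ((ωc x * δ x - ωh x * δh x) / (ωh x * δh x) * π x * (μ x - μh x)) *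
            Pr p (fun ω => X ω = x) := by
      rw [hrepl (fun ω y => p ω *
        ((ωc y * δ y - ωh y * δh y) / (ωh y * δh y) * π y * (μ y - μh y))), hconst]
    have G4 : (∑ ω, if X ω = x then p ω *
          ((δ (X ω) - δh (X ω)) / δh (X ω) * μh (X ω) * (π (X ω) - πh (X ω))) else 0)
        = ((δ x - δh x) / δh x * μh x * (π x - πh x)) * Pr p (fun ω => X ω = x) := by
      rw [hrepl (fun ω y => p ω *
        ((δ y - δh y) / δh y * μh y * (π y - πh y))), hconst]
    rw [G1, G2, G3, G4, hμx, hπx, hωx, hδx, ← e2, eSR, eSA]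
    field_simp
    ring
  · -- zero fiber case
    have hN : Pr p (fun ω => X ω = x) = 0 := by
      have hnn : 0 ≤ Pr p (fun ω => X ω = x) :=
        Finset.sum_nonneg fun ω _ => by split_ifs <;> [exact hp0 ω; exact le_rfl]
      have := not_lt.mp hN0
      linarith
    have hz : ∀ ω, X ω = x → p ω = 0 := by
      intro ω hω
      have h0 := (Finset.sum_eq_zero_iff_of_nonneg
        (fun ω _ => by split_ifs <;> [exact hp0 ω; exact le_rfl] :
          ∀ ω ∈ Finset.univ, (0:ℝ) ≤ if X ω = x then p ω else 0)).mp hN ω (Finset.mem_univ ω)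
      rwa [if_pos hω] at h0
    have z : ∀ f : Ω → ℝ, (∑ ω, if X ω = x then p ω * f ω else 0) = 0 := by
      intro f
      refine Finset.sum_eq_zero fun ω _ => ?_
      split_ifs with h
      · rw [hz ω h, zero_mul]
      · rfl
    simp only [z]
    norm_num
end

section
/- For arbitrary functions π̂, δ̂ with δ̂ > 0, E[ π̂ + (1(Z=1)/δ̂)(A − π̂) ] − E[π] = E[ ((δ − δ̂)/δ̂)(π − π̂) ], where π(X) = E(A | X, Z=1) and δ(X) = P(Z=1 | X) > 0. -/
open Finset
open scoped Classical

private lemma fib_sum {Ω 𝕏 : Type*} [Fintype Ω] [Fintype 𝕏] (X : Ω → 𝕏) (g : Ω → ℝ)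
    (h : 𝕏 → ℝ) :
    ∑ ω, g ω * h (X ω) = ∑ x, (∑ ω, if X ω = x then g ω else 0) * h x := by
  classical
  have : ∀ x : 𝕏, (∑ ω, if X ω = x then g ω else 0) * h x
      = ∑ ω, if X ω = x then g ω * h x else 0 := by
    intro x
    rw [Finset.sum_mul]
    exact Finset.sum_congr rfl fun ω _ => by split <;> simp
  simp_rw [this]
  rw [Finset.sum_comm]
  refine Finset.sum_congr rfl fun ω _ => ?_
  rw [Finset.sum_ite_eq]
  simp

/-- doubly robust bias identity for the treatment-propensity functional. -/
theorem doubly_robust_bias_treatment {Ω 𝕏 : Type*} [Fintype Ω] [Fintype 𝕏]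
    (p : Ω → ℝ) (hp0 : ∀ ω, 0 ≤ p ω) (hp1 : ∑ ω, p ω = 1)
    (X : Ω → 𝕏) (Z A : Ω → ℝ)
    (hZbin : ∀ ω, Z ω = 0 ∨ Z ω = 1) (hAbin : ∀ ω, A ω = 0 ∨ A ω = 1)
    (πh δh : 𝕏 → ℝ) (hδh : ∀ x, 0 < δh x)
    (hpos : ∀ x : 𝕏, Pr p (fun ω => X ω = x) > 0 →
      Pr p (fun ω => Z ω = 1 ∧ X ω = x) > 0) :
    let δ : 𝕏 → ℝ := fun x =>
      Pr p (fun ω => Z ω = 1 ∧ X ω = x) / Pr p (fun ω => X ω = x)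
    let π : 𝕏 → ℝ := fun x => cexp p A (fun ω => X ω = x ∧ Z ω = 1)
    Ex p (fun ω => πh (X ω) + (if Z ω = 1 then 1 else 0) / δh (X ω) * (A ω - πh (X ω)))
      - Ex p (fun ω => π (X ω))
    = Ex p (fun ω => (δ (X ω) - δh (X ω)) / δh (X ω) * (π (X ω) - πh (X ω))) := by
  classical
  intro δ π
  set P : 𝕏 → ℝ := fun x => Pr p (fun ω => X ω = x) with hP
  set Q : 𝕏 → ℝ := fun x => Pr p (fun ω => Z ω = 1 ∧ X ω = x) with hQ
  set S : 𝕏 → ℝ := fun x => ∑ ω, if Z ω = 1 ∧ X ω = x then p ω * A ω else 0 with hS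
  -- basic inequalities
  have hPnn : ∀ x, 0 ≤ P x := fun x =>
    Finset.sum_nonneg fun ω _ => by split <;> [exact hp0 ω; exact le_rfl]
  have hQP : ∀ x, Q x ≤ P x := by
    intro x
    refine Finset.sum_le_sum fun ω _ => ?_
    by_cases h1 : Z ω = 1 ∧ X ω = x
    · simp [h1, h1.1, h1.2]
    · simp only [h1, if_false]
      split <;> [exact hp0 ω; exact le_rfl]
  have hQnn : ∀ x, 0 ≤ Q x := fun x =>
    Finset.sum_nonneg fun ω _ => by split <;> [exact hp0 ω; exact le_rfl]
  have hSQ : ∀ x, S x ≤ Q x := by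
    intro x
    refine Finset.sum_le_sum fun ω _ => ?_
    split
    · rcases hAbin ω with h | h <;> simp [h] <;> exact hp0 ω
    · exact le_rfl
  have hSnn : ∀ x, 0 ≤ S x := by
    intro x
    refine Finset.sum_nonneg fun ω _ => ?_
    split
    · rcases hAbin ω with h | h <;> simp [h] <;> exact hp0 ω
    · exact le_rfl
  -- π and δ in terms of S, Q, P
  have hπ : ∀ x, π x = S x / Q x := by
    intro x
    show cexp p A (fun ω => X ω = x ∧ Z ω = 1) = S x / Q x
    unfold cexp Pr
    congr 1
    · exact Finset.sum_congr rfl fun ω _ => by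
        by_cases h1 : Z ω = 1 <;> by_cases h2 : X ω = x <;> simp [h1, h2, hS]
    · exact Finset.sum_congr rfl fun ω _ => by
        by_cases h1 : Z ω = 1 <;> by_cases h2 : X ω = x <;> simp [h1, h2, hQ, Pr]
  have hδ : ∀ x, δ x = Q x / P x := fun x => rfl
  -- rewrite the three expectations fiberwise
  have e1 : Ex p (fun ω => πh (X ω) + (if Z ω = 1 then 1 else 0) / δh (X ω)
        * (A ω - πh (X ω)))
      = ∑ x, (P x * πh x + S x * (1 / δh x) - Q x * (πh x / δh x)) := by
    unfold Ex
    have : ∀ ω, p ω * (πh (X ω) + (if Z ω = 1 then 1 else 0) / δh (X ω)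
          * (A ω - πh (X ω)))
        = p ω * πh (X ω) + (if Z ω = 1 then p ω * A ω else 0) * (1 / δh (X ω))
          - (if Z ω = 1 then p ω else 0) * (πh (X ω) / δh (X ω)) := by
      intro ω
      by_cases hz : Z ω = 1 <;> simp [hz] <;> ring
    simp_rw [this]
    rw [Finset.sum_sub_distrib, Finset.sum_add_distrib,
      fib_sum X p πh, fib_sum X (fun ω => if Z ω = 1 then p ω * A ω else 0) (fun x => 1 / δh x),
      fib_sum X (fun ω => if Z ω = 1 then p ω else 0) (fun x => πh x / δh x),
      ← Finset.sum_add_distrib, ← Finset.sum_sub_distrib]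
    refine Finset.sum_congr rfl fun x _ => ?_
    have h1 : (∑ ω, if X ω = x then (if Z ω = 1 then p ω * A ω else 0) else 0) = S x := by
      refine Finset.sum_congr rfl fun ω _ => ?_
      by_cases hz : Z ω = 1 <;> by_cases hx : X ω = x <;> simp [hz, hx]
    have h2 : (∑ ω, if X ω = x then (if Z ω = 1 then p ω else 0) else 0) = Q x := by
      refine Finset.sum_congr rfl fun ω _ => ?_
      by_cases hz : Z ω = 1 <;> by_cases hx : X ω = x <;> simp [hz, hx, Pr]
    beta_reduce
    have h3 : (∑ ω, if X ω = x then p ω else 0) = P x := rfl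
    rw [h1, h2, h3]
  have e2 : Ex p (fun ω => π (X ω)) = ∑ x, P x * π x := fib_sum X p π
  have e3 : Ex p (fun ω => (δ (X ω) - δh (X ω)) / δh (X ω) * (π (X ω) - πh (X ω)))
      = ∑ x, P x * ((δ x - δh x) / δh x * (π x - πh x)) :=
    fib_sum X p (fun x => (δ x - δh x) / δh x * (π x - πh x))
  rw [e1, e2, e3, ← Finset.sum_sub_distrib]
  refine Finset.sum_congr rfl fun x _ => ?_
  rw [hπ, hδ]
  rcases eq_or_lt_of_le (hPnn x) with h0 | h0
  · -- degenerate fiber : P x = 0, hence Q x = 0, S x = 0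
    have hQ0 : Q x = 0 := le_antisymm (h0 ▸ hQP x) (hQnn x)
    have hS0 : S x = 0 := le_antisymm (hQ0 ▸ hSQ x) (hSnn x)
    simp [← h0, hQ0, hS0]
  · have hQ0 : 0 < Q x := hpos x h0
    have hδh' : δh x ≠ 0 := ne_of_gt (hδh x)
    field_simp
    ring
end
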